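/- In the directed half-plane lattice with i.i.d. non-atomic edge weights of mean 1, there exists a constant κ > 0 such that, writing W_n = d̂_ω((k_n, n), ∂Ĥ) for the directed first-passage time from any chosen vertex on level n to the bottom boundary, lim_{n→∞} P[W_n < (1−κ)n] = 1. -/

import Mathlib

open MeasureTheory ProbabilityTheory Filter Topology
open scoped ENNReal

/-- Edges of the directed half-plane lattice `Ĥ`, indexed by their lower
endpoint `v` together with a Boolean which is `true` when the upper endpoint is
`v + (1,1)` and `false` when it is `v + (-1,1)`; the edge points downwards. -/
abbrev DirHPEdge := (ℤ × ℤ) × Bool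

/-- Total weight of the directed path which visits the vertex `(p j, j)` on
level `j` for `0 ≤ j ≤ n`, descending from level `n` to level `0`. -/
def dirWt (W : DirHPEdge → ℝ) (p : ℕ → ℤ) (n : ℕ) : ℝ :=
  ∑ j ∈ Finset.range n, W ((p j, (j : ℤ)), decide (p (j + 1) = p j + 1))

/-- The directed first-passage time `d̂_ω((x,n), ∂Ĥ)` from the vertex `(x,n)`
to the bottom boundary `∂Ĥ = (2ℤ) × {0}`: the infimum of path weights over all
directed paths descending from `(x, n)` to level `0`. -/
noncomputable def bdryTime (W : DirHPEdge → ℝ) (x : ℤ) (n : ℕ) : ℝ :=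
  sInf {r : ℝ | ∃ q : ℕ → ℤ, q n = x ∧
    (∀ j < n, q (j + 1) = q j + 1 ∨ q (j + 1) = q j - 1) ∧
    r = dirWt W q n}

namespace BPTS

def eR0 (b : ℤ) (i : ℕ) : DirHPEdge := ((b, 2*(i:ℤ)), true)
def eR1 (b : ℤ) (i : ℕ) : DirHPEdge := ((b+1, 2*(i:ℤ)+1), false)
def eL0 (b : ℤ) (i : ℕ) : DirHPEdge := ((b, 2*(i:ℤ)), false)
def eL1 (b : ℤ) (i : ℕ) : DirHPEdge := ((b-1, 2*(i:ℤ)+1), true)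

/-- minimum over the two two-step corridor routes in block `i` based at `b`. -/
def blockMin (V : DirHPEdge → ℝ) (b : ℤ) (i : ℕ) : ℝ :=
  min (V (eR0 b i) + V (eR1 b i)) (V (eL0 b i) + V (eL1 b i))


lemma bdryTime_le (V : DirHPEdge → ℝ) (hV : ∀ e, 0 ≤ V e) (k : ℤ) (n : ℕ) :
    bdryTime V k n ≤ (∑ i ∈ Finset.range (n/2), blockMin V (if Even n then k else k+1) i)
      + (if Even n then 0 else V (eL0 (if Even n then k else k+1) (n/2))) := by
  set b : ℤ := if Even n then k else k+1 with hb
  set s : ℕ → ℤ := fun i =>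
    if V (eR0 b i) + V (eR1 b i) ≤ V (eL0 b i) + V (eL1 b i) then 1 else -1 with hs
  set q : ℕ → ℤ := fun j => if j % 2 = 0 then b else if j = n then b - 1 else b + s (j / 2)
    with hq
  have hs1 : ∀ i, s i = 1 ∨ s i = -1 := by
    intro i; rw [hs]; dsimp only; split <;> simp
  have qeven : ∀ j, j % 2 = 0 → q j = b := by
    intro j h; rw [hq]; dsimp only; rw [if_pos h]
  have qodd : ∀ j, j % 2 = 1 → j ≠ n → q j = b + s (j/2) := by
    intro j h h'; rw [hq]; dsimp only; rw [if_neg (by omega), if_neg h']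
  have qlast : n % 2 = 1 → q n = b - 1 := by
    intro h; rw [hq]; dsimp only; rw [if_neg (by omega), if_pos rfl]
  have hqn : q n = k := by
    rcases Nat.even_or_odd n with h | h
    · rw [qeven n (Nat.even_iff.mp h), hb, if_pos h]
    · rw [qlast (Nat.odd_iff.mp h), hb, if_neg (Nat.not_even_iff_odd.mpr h)]; ring
  have hstep : ∀ j < n, q (j + 1) = q j + 1 ∨ q (j + 1) = q j - 1 := by
    intro j hj
    rcases Nat.even_or_odd j with hje | hjo
    · have h1 : j % 2 = 0 := Nat.even_iff.mp hje
      rw [qeven j h1]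
      by_cases hn : j + 1 = n
      · rw [hn, qlast (by omega)]; right; ring
      · rw [qodd (j+1) (by omega) hn]
        rcases hs1 ((j+1)/2) with h | h <;> rw [h]
        · left; ring
        · right; ring
    · have h1 : j % 2 = 1 := Nat.odd_iff.mp hjo
      rw [qodd j h1 (by omega), qeven (j+1) (by omega)]
      rcases hs1 (j/2) with h | h <;> rw [h]
      · right; ring
      · left; ring
  -- block computation
  have hblock : ∀ M : ℕ, 2*M ≤ n →
      ∑ j ∈ Finset.range (2*M), V ((q j, (j:ℤ)), decide (q (j+1) = q j + 1))
        = ∑ i ∈ Finset.range M, blockMin V b i := by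
    intro M
    induction M with
    | zero => simp
    | succ M ih =>
      intro hM
      have h2M : 2 * (M+1) = (2*M) + 1 + 1 := by ring
      rw [h2M, Finset.sum_range_succ, Finset.sum_range_succ,
        ih (by omega), Finset.sum_range_succ]
      have e1 : q (2*M) = b := qeven _ (by omega)
      have e2 : q (2*M+1) = b + s M := by
        rw [qodd (2*M+1) (by omega) (by omega)]
        have : (2*M+1)/2 = M := by omega
        rw [this]
      have e3 : q (2*M+1+1) = b := qeven _ (by omega)
      rw [e1, e2, e3]
      have c0 : ((2*M : ℕ) : ℤ) = 2*(M:ℤ) := by push_cast; ring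
      have c1 : ((2*M+1 : ℕ) : ℤ) = 2*(M:ℤ)+1 := by push_cast; ring
      rw [c0, c1]
      rcases le_or_gt (V (eR0 b M) + V (eR1 b M)) (V (eL0 b M) + V (eL1 b M)) with hc | hc
      · have hsM : s M = 1 := by rw [hs]; dsimp only; rw [if_pos hc]
        rw [hsM]
        have d1 : decide (b + 1 = b + 1) = true := by simp
        have d2 : decide (b = b + 1 + 1) = false := by simp <;> omega
        rw [d1, d2]
        have hmin : blockMin V b M = V (eR0 b M) + V (eR1 b M) := min_eq_left hc
        rw [hmin]
        simp only [eR0, eR1]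
        ring
      · have hsM : s M = -1 := by rw [hs]; dsimp only; rw [if_neg (not_le.mpr hc)]
        rw [hsM]
        have d1 : decide (b + (-1) = b + 1) = false := by simp <;> omega
        have d2 : decide (b = b + (-1) + 1) = true := by simp
        rw [d1, d2]
        have hmin : blockMin V b M = V (eL0 b M) + V (eL1 b M) := min_eq_right hc.le
        rw [hmin]
        have hb1 : b + -1 = b - 1 := by ring
        rw [hb1]
        simp only [eL0, eL1]
        ring
  have hval : dirWt V q n = (∑ i ∈ Finset.range (n/2), blockMin V b i)
      + (if Even n then 0 else V (eL0 b (n/2))) := by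
    rcases Nat.even_or_odd n with h | h
    · have he := Nat.even_iff.mp h
      have hn : n = 2 * (n/2) := by omega
      rw [dirWt, if_pos h]
      nth_rewrite 1 [hn]
      rw [hblock (n/2) (by omega)]
      simp
    · have ho := Nat.odd_iff.mp h
      have h2 : ¬ Even n := Nat.not_even_iff_odd.mpr h
      have hn : n = 2 * (n/2) + 1 := by omega
      rw [dirWt, if_neg h2]
      nth_rewrite 1 [hn]
      rw [Finset.sum_range_succ, hblock (n/2) (by omega)]
      congr 1
      have e1 : q (2*(n/2)) = b := qeven _ (by omega)
      have hne : 2*(n/2)+1 = n := by omega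
      have e2 : q (2*(n/2)+1) = b - 1 := by rw [hne, qlast ho]
      rw [e1, e2]
      have d1 : decide (b - 1 = b + 1) = false := by simp <;> omega
      rw [d1]
      have c0 : ((2*(n/2) : ℕ) : ℤ) = 2*((n/2 : ℕ):ℤ) := by push_cast; ring
      rw [c0]
      simp [eL0]
  have hmem : dirWt V q n ∈ {r : ℝ | ∃ q' : ℕ → ℤ, q' n = k ∧
      (∀ j < n, q' (j + 1) = q' j + 1 ∨ q' (j + 1) = q' j - 1) ∧ r = dirWt V q' n} :=
    ⟨q, hqn, hstep, rfl⟩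
  have hbdd : BddBelow {r : ℝ | ∃ q' : ℕ → ℤ, q' n = k ∧
      (∀ j < n, q' (j + 1) = q' j + 1 ∨ q' (j + 1) = q' j - 1) ∧ r = dirWt V q' n} := by
    refine ⟨0, ?_⟩
    rintro r ⟨q', -, -, rfl⟩
    exact Finset.sum_nonneg fun j _ => hV _
  calc bdryTime V k n ≤ dirWt V q n := csInf_le hbdd hmem
    _ = _ := by rw [hval]

section Prob

variable {Ω : Type*} [MeasureSpace Ω] [IsProbabilityMeasure (ℙ : Measure Ω)]
  {μ : Measure ℝ} {W : DirHPEdge → Ω → ℝ}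

/-- The block variables. -/
def Z (W : DirHPEdge → Ω → ℝ) (b : ℤ) (i : ℕ) : Ω → ℝ :=
  fun ω => blockMin (fun e => W e ω) b i

lemma measurable_Z (hmeas : ∀ e, Measurable (W e)) (b : ℤ) (i : ℕ) :
    Measurable (Z W b i) :=
  (((hmeas _).add (hmeas _)).min ((hmeas _).add (hmeas _)))

def blockSet (b : ℤ) (i : ℕ) : Finset DirHPEdge := {eR0 b i, eR1 b i, eL0 b i, eL1 b i}

def sumSet (b : ℤ) (m : ℕ) : Finset DirHPEdge := (Finset.range m).biUnion (blockSet b)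

lemma level_of_mem_blockSet {b : ℤ} {i : ℕ} {e : DirHPEdge} (h : e ∈ blockSet b i) :
    e.1.2 = 2*(i:ℤ) ∨ e.1.2 = 2*(i:ℤ)+1 := by
  simp only [blockSet, Finset.mem_insert, Finset.mem_singleton] at h
  rcases h with h | h | h | h <;> subst h <;> simp [eR0, eR1, eL0, eL1]

lemma blockSet_disjoint {b : ℤ} {i j : ℕ} (h : i ≠ j) :
    Disjoint (blockSet b i) (blockSet b j) := by
  rw [Finset.disjoint_left]
  intro e he he'
  have h1 := level_of_mem_blockSet he
  have h2 := level_of_mem_blockSet he'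
  have : (i : ℤ) ≠ (j : ℤ) := by exact_mod_cast h
  omega

lemma sumSet_disjoint {b : ℤ} {m : ℕ} : Disjoint (sumSet b m) (blockSet b m) := by
  rw [Finset.disjoint_left]
  intro e he he'
  rw [sumSet, Finset.mem_biUnion] at he
  obtain ⟨i, hi, hei⟩ := he
  rw [Finset.mem_range] at hi
  have h1 := level_of_mem_blockSet hei
  have h2 := level_of_mem_blockSet he'
  have : (i : ℤ) < (m : ℤ) := by exact_mod_cast hi
  omega

lemma memR0 {b : ℤ} {i : ℕ} : eR0 b i ∈ blockSet b i := by simp [blockSet]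
lemma memR1 {b : ℤ} {i : ℕ} : eR1 b i ∈ blockSet b i := by simp [blockSet]
lemma memL0 {b : ℤ} {i : ℕ} : eL0 b i ∈ blockSet b i := by simp [blockSet]
lemma memL1 {b : ℤ} {i : ℕ} : eL1 b i ∈ blockSet b i := by simp [blockSet]

/-- extractor for a block. -/
def gZ (b : ℤ) (i : ℕ) (v : ∀ _ : ↥(blockSet b i), ℝ) : ℝ :=
  min (v ⟨eR0 b i, memR0⟩ + v ⟨eR1 b i, memR1⟩) (v ⟨eL0 b i, memL0⟩ + v ⟨eL1 b i, memL1⟩)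

lemma measurable_gZ (b : ℤ) (i : ℕ) : Measurable (gZ b i) := by
  unfold gZ; fun_prop

lemma mem_sumSet {b : ℤ} {m i : ℕ} (hi : i ∈ Finset.range m) {e : DirHPEdge}
    (he : e ∈ blockSet b i) : e ∈ sumSet b m :=
  Finset.mem_biUnion.mpr ⟨i, hi, he⟩

/-- extractor for the sum of the first `m` blocks. -/
def gS (b : ℤ) (m : ℕ) (v : ∀ _ : ↥(sumSet b m), ℝ) : ℝ :=
  ∑ i ∈ (Finset.range m).attach,
    min (v ⟨eR0 b i, mem_sumSet i.2 memR0⟩ + v ⟨eR1 b i, mem_sumSet i.2 memR1⟩)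
      (v ⟨eL0 b i, mem_sumSet i.2 memL0⟩ + v ⟨eL1 b i, mem_sumSet i.2 memL1⟩)

lemma measurable_gS (b : ℤ) (m : ℕ) : Measurable (gS b m) := by
  unfold gS; exact Finset.measurable_sum _ fun i _ => by fun_prop

lemma indepFun_Z (hmeas : ∀ e, Measurable (W e))
    (hindep : iIndepFun W ℙ) (b : ℤ) {i j : ℕ} (hij : i ≠ j) :
    IndepFun (Z W b i) (Z W b j) ℙ := by
  have h := (hindep.indepFun_finset (blockSet b i) (blockSet b j) (blockSet_disjoint hij)
    hmeas).comp (measurable_gZ b i) (measurable_gZ b j)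
  exact h

lemma indepFun_sum_Z (hmeas : ∀ e, Measurable (W e))
    (hindep : iIndepFun W ℙ) (b : ℤ) (m : ℕ) :
    IndepFun (fun ω => ∑ i ∈ Finset.range m, Z W b i ω) (Z W b m) ℙ := by
  have h := (hindep.indepFun_finset (sumSet b m) (blockSet b m) sumSet_disjoint
    hmeas).comp (measurable_gS b m) (measurable_gZ b m)
  have he : (fun ω => ∑ i ∈ Finset.range m, Z W b i ω)
      = (gS b m) ∘ (fun a (e : ↥(sumSet b m)) => W e a) := by
    funext ω
    rw [← Finset.sum_attach (Finset.range m) (fun i => Z W b i ω)]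
    rfl
  rw [he]
  exact h

variable [IsProbabilityMeasure μ]

lemma integrable_id_mu (hmean : ∫ t, t ∂μ = 1) : Integrable (fun t : ℝ => t) μ := by
  by_contra h
  rw [integral_undef h] at hmean
  norm_num at hmean

lemma integrable_W (hmeas : ∀ e, Measurable (W e)) (hdist : ∀ e, Measure.map (W e) ℙ = μ)
    (hmean : ∫ t, t ∂μ = 1) (e : DirHPEdge) : Integrable (W e) ℙ := by
  have h1 : Integrable (fun t : ℝ => t) (Measure.map (W e) ℙ) := by
    rw [hdist]; exact integrable_id_mu hmean
  exact (integrable_map_measure aestronglyMeasurable_id (hmeas e).aemeasurable).mp h1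

lemma integral_W (hmeas : ∀ e, Measurable (W e)) (hdist : ∀ e, Measure.map (W e) ℙ = μ)
    (hmean : ∫ t, t ∂μ = 1) (e : DirHPEdge) : ∫ ω, W e ω ∂ℙ = 1 := by
  have h : ∫ t, t ∂(Measure.map (W e) ℙ) = ∫ ω, W e ω ∂ℙ :=
    integral_map (hmeas e).aemeasurable aestronglyMeasurable_id
  rw [← h, hdist e, hmean]

lemma ae_nonneg_W (hmeas : ∀ e, Measurable (W e)) (hdist : ∀ e, Measure.map (W e) ℙ = μ)
    (hsupp : μ (Set.Iio 0) = 0) (e : DirHPEdge) : 0 ≤ᵐ[ℙ] W e := by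
  have h0 : ℙ {ω | W e ω < 0} = 0 := by
    have h1 : {ω | W e ω < 0} = W e ⁻¹' (Set.Iio 0) := rfl
    rw [h1, ← Measure.map_apply (hmeas e) measurableSet_Iio, hdist e]
    exact hsupp
  have h2 : ∀ᵐ ω ∂ℙ, ¬ (W e ω < 0) := by
    rw [ae_iff]
    simpa using h0
  filter_upwards [h2] with ω h
  exact not_lt.mp h

lemma map_pair (hmeas : ∀ e, Measurable (W e))
    (hindep : iIndepFun W ℙ)
    (hdist : ∀ e, Measure.map (W e) ℙ = μ) {e e' : DirHPEdge} (h : e ≠ e') :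
    Measure.map (fun ω => (W e ω, W e' ω)) ℙ = μ.prod μ := by
  have hi := hindep.indepFun h
  rw [(indepFun_iff_map_prod_eq_prod_map_map (hmeas e).aemeasurable
    (hmeas e').aemeasurable).mp hi, hdist, hdist]

lemma eR0_ne_eR1 {b : ℤ} {i : ℕ} : eR0 b i ≠ eR1 b i := by simp [eR0, eR1]
lemma eL0_ne_eL1 {b : ℤ} {i : ℕ} : eL0 b i ≠ eL1 b i := by simp [eL0, eL1]
lemma eR0_ne_eL0 {b : ℤ} {i : ℕ} : eR0 b i ≠ eL0 b i := by simp [eR0, eL0]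
lemma eR0_ne_eL1 {b : ℤ} {i : ℕ} : eR0 b i ≠ eL1 b i := by
  simp only [eR0, eL1, ne_eq, Prod.mk.injEq]
  intro ⟨⟨_, h⟩, _⟩
  omega
lemma eR1_ne_eL0 {b : ℤ} {i : ℕ} : eR1 b i ≠ eL0 b i := by
  simp only [eR1, eL0, ne_eq, Prod.mk.injEq]
  intro ⟨⟨_, h⟩, _⟩
  omega
lemma eR1_ne_eL1 {b : ℤ} {i : ℕ} : eR1 b i ≠ eL1 b i := by simp [eR1, eL1]

/-- the function giving the block minimum from the quadruple of weights. -/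
def quadMin : (ℝ × ℝ) × (ℝ × ℝ) → ℝ := fun p => min (p.1.1 + p.1.2) (p.2.1 + p.2.2)

lemma measurable_quadMin : Measurable quadMin := by unfold quadMin; fun_prop

lemma map_quad (hmeas : ∀ e, Measurable (W e))
    (hindep : iIndepFun W ℙ)
    (hdist : ∀ e, Measure.map (W e) ℙ = μ) (b : ℤ) (i : ℕ) :
    Measure.map (fun ω => ((W (eR0 b i) ω, W (eR1 b i) ω), (W (eL0 b i) ω, W (eL1 b i) ω))) ℙ
      = (μ.prod μ).prod (μ.prod μ) := by
  have hi : IndepFun (fun ω => (W (eR0 b i) ω, W (eR1 b i) ω))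
      (fun ω => (W (eL0 b i) ω, W (eL1 b i) ω)) ℙ :=
    hindep.indepFun_prodMk_prodMk hmeas _ _ _ _ eR0_ne_eL0 eR0_ne_eL1 eR1_ne_eL0 eR1_ne_eL1
  rw [(indepFun_iff_map_prod_eq_prod_map_map
    (((hmeas _).prodMk (hmeas _)).aemeasurable)
    (((hmeas _).prodMk (hmeas _)).aemeasurable)).mp hi,
    map_pair hmeas hindep hdist eR0_ne_eR1, map_pair hmeas hindep hdist eL0_ne_eL1]

lemma map_Z (hmeas : ∀ e, Measurable (W e))
    (hindep : iIndepFun W ℙ)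
    (hdist : ∀ e, Measure.map (W e) ℙ = μ) (b : ℤ) (i : ℕ) :
    Measure.map (Z W b i) ℙ = Measure.map quadMin ((μ.prod μ).prod (μ.prod μ)) := by
  have h1 : Z W b i = quadMin ∘
      (fun ω => ((W (eR0 b i) ω, W (eR1 b i) ω), (W (eL0 b i) ω, W (eL1 b i) ω))) := rfl
  rw [h1, ← Measure.map_map measurable_quadMin
    (((hmeas _).prodMk (hmeas _)).prodMk ((hmeas _).prodMk (hmeas _))),
    map_quad hmeas hindep hdist]

lemma identDistrib_Z (hmeas : ∀ e, Measurable (W e))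
    (hindep : iIndepFun W ℙ)
    (hdist : ∀ e, Measure.map (W e) ℙ = μ) (b b' : ℤ) (i i' : ℕ) :
    IdentDistrib (Z W b i) (Z W b' i') ℙ ℙ :=
  ⟨(measurable_Z hmeas b i).aemeasurable, (measurable_Z hmeas b' i').aemeasurable,
    by rw [map_Z hmeas hindep hdist, map_Z hmeas hindep hdist]⟩

lemma integrable_Z (hmeas : ∀ e, Measurable (W e))
    (hdist : ∀ e, Measure.map (W e) ℙ = μ)
    (hsupp : μ (Set.Iio 0) = 0) (hmean : ∫ t, t ∂μ = 1) (b : ℤ) (i : ℕ) :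
    Integrable (Z W b i) ℙ := by
  have hbd : Integrable (fun ω => W (eR0 b i) ω + W (eR1 b i) ω
      + W (eL0 b i) ω + W (eL1 b i) ω) ℙ :=
    (((integrable_W hmeas hdist hmean _).add (integrable_W hmeas hdist hmean _)).add
      (integrable_W hmeas hdist hmean _)).add (integrable_W hmeas hdist hmean _)
  refine hbd.mono' (measurable_Z hmeas b i).aestronglyMeasurable ?_
  filter_upwards [ae_nonneg_W hmeas hdist hsupp (eR0 b i),
    ae_nonneg_W hmeas hdist hsupp (eR1 b i), ae_nonneg_W hmeas hdist hsupp (eL0 b i),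
    ae_nonneg_W hmeas hdist hsupp (eL1 b i)] with ω h1 h2 h3 h4
  simp only [Pi.zero_apply] at h1 h2 h3 h4
  have hzz : Z W b i ω = min (W (eR0 b i) ω + W (eR1 b i) ω)
      (W (eL0 b i) ω + W (eL1 b i) ω) := rfl
  have hz : 0 ≤ Z W b i ω := by rw [hzz]; exact le_min (by linarith) (by linarith)
  have hz2 : Z W b i ω ≤ W (eR0 b i) ω + W (eR1 b i) ω := by rw [hzz]; exact min_le_left _ _
  rw [Real.norm_eq_abs, abs_of_nonneg hz]
  linarith

lemma map_sum_Z (hmeas : ∀ e, Measurable (W e))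
    (hindep : iIndepFun W ℙ)
    (hdist : ∀ e, Measure.map (W e) ℙ = μ) (b : ℤ) (m : ℕ) :
    Measure.map (fun ω => ∑ i ∈ Finset.range m, Z W b i ω) ℙ
      = Measure.map (fun ω => ∑ i ∈ Finset.range m, Z W 0 i ω) ℙ := by
  induction m with
  | zero => simp
  | succ m ih =>
    have key : ∀ c : ℤ, Measure.map (fun ω => ∑ i ∈ Finset.range (m+1), Z W c i ω) ℙ
        = Measure.map (fun p : ℝ × ℝ => p.1 + p.2)
          ((Measure.map (fun ω => ∑ i ∈ Finset.range m, Z W c i ω) ℙ).prod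
            (Measure.map (Z W c m) ℙ)) := by
      intro c
      have hmS : Measurable (fun ω => ∑ i ∈ Finset.range m, Z W c i ω) :=
        Finset.measurable_sum _ fun i _ => measurable_Z hmeas c i
      have hi := indepFun_sum_Z hmeas hindep c m
      have hprod := (indepFun_iff_map_prod_eq_prod_map_map hmS.aemeasurable
        (measurable_Z hmeas c m).aemeasurable).mp hi
      have h1 : (fun ω => ∑ i ∈ Finset.range (m+1), Z W c i ω)
          = (fun p : ℝ × ℝ => p.1 + p.2) ∘
            (fun ω => (∑ i ∈ Finset.range m, Z W c i ω, Z W c m ω)) := by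
        funext ω
        simp [Finset.sum_range_succ]
      rw [h1, ← Measure.map_map (by fun_prop) (hmS.prodMk (measurable_Z hmeas c m)),
        hprod]
    rw [key b, key 0, ih, map_Z hmeas hindep hdist b m, map_Z hmeas hindep hdist 0 m]

lemma identDistrib_sum_Z (hmeas : ∀ e, Measurable (W e))
    (hindep : iIndepFun W ℙ)
    (hdist : ∀ e, Measure.map (W e) ℙ = μ) (b : ℤ) (m : ℕ) :
    IdentDistrib (fun ω => ∑ i ∈ Finset.range m, Z W b i ω)
      (fun ω => ∑ i ∈ Finset.range m, Z W 0 i ω) ℙ ℙ :=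
  ⟨(Finset.measurable_sum _ fun i _ => measurable_Z hmeas b i).aemeasurable,
    (Finset.measurable_sum _ fun i _ => measurable_Z hmeas 0 i).aemeasurable,
    map_sum_Z hmeas hindep hdist b m⟩

lemma lam_atom (hatom : ∀ a : ℝ, μ {a} = 0) (a : ℝ) :
    Measure.map (fun p : ℝ × ℝ => p.1 + p.2) (μ.prod μ) {a} = 0 := by
  rw [Measure.map_apply (by fun_prop) (measurableSet_singleton a)]
  have hset : (fun p : ℝ × ℝ => p.1 + p.2) ⁻¹' {a} =
      {p : ℝ × ℝ | p.1 + p.2 = a} := by ext p; simp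
  rw [hset, Measure.prod_apply (by
    exact measurableSet_preimage (by fun_prop) (measurableSet_singleton a))]
  have hx : ∀ x : ℝ, (Prod.mk x ⁻¹' {p : ℝ × ℝ | p.1 + p.2 = a}) = {a - x} := by
    intro x
    ext y
    simp only [Set.mem_preimage, Set.mem_setOf_eq, Set.mem_singleton_iff]
    constructor <;> intro h <;> linarith
  simp only [hx, hatom]
  simp

lemma integral_Z_lt_two (hmeas : ∀ e, Measurable (W e))
    (hindep : iIndepFun W ℙ)
    (hdist : ∀ e, Measure.map (W e) ℙ = μ)
    (hatom : ∀ a : ℝ, μ {a} = 0)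
    (hsupp : μ (Set.Iio 0) = 0) (hmean : ∫ t, t ∂μ = 1) :
    ∫ ω, Z W (0:ℤ) 0 ω ∂ℙ < 2 := by
  set R : Ω → ℝ := fun ω => W (eR0 0 0) ω + W (eR1 0 0) ω with hR
  set L : Ω → ℝ := fun ω => W (eL0 0 0) ω + W (eL1 0 0) ω with hL
  have hRmeas : Measurable R := (hmeas _).add (hmeas _)
  have hLmeas : Measurable L := (hmeas _).add (hmeas _)
  have hRint : Integrable R ℙ :=
    (integrable_W hmeas hdist hmean _).add (integrable_W hmeas hdist hmean _)
  have hintR : ∫ ω, R ω ∂ℙ = 2 := by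
    rw [hR, integral_add (integrable_W hmeas hdist hmean _)
      (integrable_W hmeas hdist hmean _), integral_W hmeas hdist hmean,
      integral_W hmeas hdist hmean]
    norm_num
  -- the law of R and L
  set lam : Measure ℝ := Measure.map (fun p : ℝ × ℝ => p.1 + p.2) (μ.prod μ) with hlam
  have hmapR : Measure.map R ℙ = lam := by
    have h1 : R = (fun p : ℝ × ℝ => p.1 + p.2) ∘ (fun ω => (W (eR0 0 0) ω, W (eR1 0 0) ω)) :=
      rfl
    rw [h1, ← Measure.map_map (by fun_prop) ((hmeas _).prodMk (hmeas _)),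
      map_pair hmeas hindep hdist eR0_ne_eR1, hlam]
  have hmapL : Measure.map L ℙ = lam := by
    have h1 : L = (fun p : ℝ × ℝ => p.1 + p.2) ∘ (fun ω => (W (eL0 0 0) ω, W (eL1 0 0) ω)) :=
      rfl
    rw [h1, ← Measure.map_map (by fun_prop) ((hmeas _).prodMk (hmeas _)),
      map_pair hmeas hindep hdist eL0_ne_eL1, hlam]
  have hlamprob : IsProbabilityMeasure lam :=
    Measure.isProbabilityMeasure_map (f := fun p : ℝ × ℝ => p.1 + p.2) (by fun_prop)
  -- independence of R and L
  have hRL : IndepFun R L ℙ := by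
    have hpp := hindep.indepFun_prodMk_prodMk hmeas (eR0 0 0) (eR1 0 0) (eL0 0 0) (eL1 0 0)
      eR0_ne_eL0 eR0_ne_eL1 eR1_ne_eL0 eR1_ne_eL1
    have h := hpp.comp (φ := fun p : ℝ × ℝ => p.1 + p.2) (ψ := fun p : ℝ × ℝ => p.1 + p.2)
      (by fun_prop) (by fun_prop)
    exact h
  have hmappair : Measure.map (fun ω => (R ω, L ω)) ℙ = lam.prod lam := by
    rw [(indepFun_iff_map_prod_eq_prod_map_map hRmeas.aemeasurable
      hLmeas.aemeasurable).mp hRL, hmapR, hmapL]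
  -- the diagonal is null
  have hdiagmeas : MeasurableSet {p : ℝ × ℝ | p.1 = p.2} :=
    measurableSet_eq_fun measurable_fst measurable_snd
  have hltmeas : MeasurableSet {p : ℝ × ℝ | p.2 < p.1} :=
    measurableSet_lt measurable_snd measurable_fst
  have hltmeas' : MeasurableSet {p : ℝ × ℝ | p.1 < p.2} :=
    measurableSet_lt measurable_fst measurable_snd
  have hdiag : (lam.prod lam) {p : ℝ × ℝ | p.1 = p.2} = 0 := by
    rw [Measure.prod_apply hdiagmeas]
    have hx : ∀ x : ℝ, (Prod.mk x ⁻¹' {p : ℝ × ℝ | p.1 = p.2}) = {x} := by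
      intro x; ext y
      simp [eq_comm]
    simp only [hx, lam_atom hatom]
    simp [hlam, lam_atom hatom]
  -- symmetry
  have hswap : (lam.prod lam) {p : ℝ × ℝ | p.2 < p.1}
      = (lam.prod lam) {p : ℝ × ℝ | p.1 < p.2} := by
    conv_lhs => rw [← Measure.prod_swap]
    rw [Measure.map_apply measurable_swap hltmeas]
    rfl
  -- positive probability that L < R
  have hstrict : (lam.prod lam) {p : ℝ × ℝ | p.2 < p.1} ≠ 0 := by
    intro h0
    have huniv : (Set.univ : Set (ℝ × ℝ)) ⊆
        {p : ℝ × ℝ | p.1 < p.2} ∪ ({p : ℝ × ℝ | p.2 < p.1} ∪ {p : ℝ × ℝ | p.1 = p.2}) := by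
      intro p _
      rcases lt_trichotomy p.1 p.2 with h | h | h
      · exact Or.inl h
      · exact Or.inr (Or.inr h)
      · exact Or.inr (Or.inl h)
    have h1 : (lam.prod lam) Set.univ ≤ 0 := by
      calc (lam.prod lam) Set.univ
          ≤ (lam.prod lam) ({p : ℝ × ℝ | p.1 < p.2} ∪
            ({p : ℝ × ℝ | p.2 < p.1} ∪ {p : ℝ × ℝ | p.1 = p.2})) := measure_mono huniv
        _ ≤ (lam.prod lam) {p : ℝ × ℝ | p.1 < p.2} +
            ((lam.prod lam) {p : ℝ × ℝ | p.2 < p.1} + (lam.prod lam) {p : ℝ × ℝ | p.1 = p.2}) :=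
          le_trans (measure_union_le _ _) (by gcongr; exact measure_union_le _ _)
        _ = 0 := by rw [← hswap, h0, hdiag]; simp
    simp [measure_univ] at h1
  have hLR : ℙ {ω | L ω < R ω} ≠ 0 := by
    have hpre : {ω | L ω < R ω} = (fun ω => (R ω, L ω)) ⁻¹' {p : ℝ × ℝ | p.2 < p.1} := rfl
    rw [hpre, ← Measure.map_apply (hRmeas.prodMk hLmeas) hltmeas, hmappair]
    exact hstrict
  -- D = R - Z ≥ 0, with positive integral
  set D : Ω → ℝ := fun ω => R ω - Z W 0 0 ω with hD
  have hZRL : ∀ ω, Z W 0 0 ω = min (R ω) (L ω) := fun ω => rfl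
  have hDmax : ∀ ω, D ω = max (R ω - L ω) 0 := by
    intro ω
    rw [hD]
    simp only [hZRL ω]
    rcases le_total (R ω) (L ω) with h | h
    · rw [min_eq_left h, max_eq_right (by linarith)]
      ring
    · rw [min_eq_right h, max_eq_left (by linarith)]
  have hDnonneg : ∀ ω, 0 ≤ D ω := fun ω => by rw [hDmax ω]; exact le_max_right _ _
  have hDint : Integrable D ℙ :=
    hRint.sub (integrable_Z hmeas hdist hsupp hmean 0 0)
  have hDsupport : {ω | L ω < R ω} ⊆ Function.support D := by
    intro ω hω
    simp only [Function.mem_support]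
    rw [hDmax ω]
    have : (0:ℝ) < R ω - L ω := by simp only [Set.mem_setOf_eq] at hω; linarith
    rw [max_eq_left this.le]
    linarith
  have hDpos : 0 < ∫ ω, D ω ∂ℙ := by
    rw [integral_pos_iff_support_of_nonneg_ae (Filter.Eventually.of_forall hDnonneg) hDint]
    have h1 : ℙ {ω | L ω < R ω} ≤ ℙ (Function.support D) := measure_mono hDsupport
    exact lt_of_lt_of_le (pos_iff_ne_zero.mpr hLR) h1
  have hZint : ∫ ω, Z W (0:ℤ) 0 ω ∂ℙ = 2 - ∫ ω, D ω ∂ℙ := by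
    have h1 : (fun ω => Z W (0:ℤ) 0 ω) = fun ω => R ω - D ω := by
      funext ω; rw [hD]; ring
    rw [h1, integral_sub hRint hDint, hintR]
  rw [hZint]
  linarith

lemma tendsto_prob_sum_ge (hmeas : ∀ e, Measurable (W e))
    (hindep : iIndepFun W ℙ)
    (hdist : ∀ e, Measure.map (W e) ℙ = μ)
    (hsupp : μ (Set.Iio 0) = 0) (hmean : ∫ t, t ∂μ = 1) {c : ℝ}
    (hc : ∫ ω, Z W (0:ℤ) 0 ω ∂ℙ < c) :
    Tendsto (fun m : ℕ => ℙ {ω | c * m ≤ ∑ i ∈ Finset.range m, Z W (0:ℤ) i ω})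
      atTop (𝓝 0) := by
  set M := ∫ ω, Z W (0:ℤ) 0 ω ∂ℙ with hMdef
  set δ := c - M with hddef
  have hδ : 0 < δ := by rw [hddef]; linarith
  have hpair : Pairwise (Function.onFun (IndepFun · · ℙ) fun i => Z W (0:ℤ) i) :=
    fun i j hij => indepFun_Z hmeas hindep 0 hij
  have hae := strong_law_ae_real (fun i => Z W (0:ℤ) i)
    (integrable_Z hmeas hdist hsupp hmean 0 0) hpair
    (fun i => identDistrib_Z hmeas hindep hdist 0 0 i 0)
  have hmeasS : ∀ m : ℕ, AEStronglyMeasurable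
      (fun ω => (∑ i ∈ Finset.range m, Z W (0:ℤ) i ω) / m) ℙ := fun m =>
    ((Finset.measurable_sum _ fun i _ => measurable_Z hmeas 0 i).div_const _).aestronglyMeasurable
  have htim : TendstoInMeasure ℙ (fun m ω => (∑ i ∈ Finset.range m, Z W (0:ℤ) i ω) / m)
      atTop (fun _ => M) := tendstoInMeasure_of_tendsto_ae hmeasS hae
  have h0 := tendstoInMeasure_iff_dist.mp htim δ hδ
  refine tendsto_of_tendsto_of_tendsto_of_le_of_le' tendsto_const_nhds h0
    (Eventually.of_forall fun m => zero_le) ?_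
  filter_upwards [eventually_ge_atTop 1] with m hm
  refine measure_mono ?_
  intro ω hω
  simp only [Set.mem_setOf_eq] at hω ⊢
  have hmpos : (0:ℝ) < m := by exact_mod_cast hm
  have h1 : M + δ ≤ (∑ i ∈ Finset.range m, Z W (0:ℤ) i ω) / m := by
    rw [le_div_iff₀ hmpos]
    calc (M + δ) * m = c * m := by rw [hddef]; ring
    _ ≤ _ := hω
  rw [Real.dist_eq]
  have h2 : δ ≤ (∑ i ∈ Finset.range m, Z W (0:ℤ) i ω) / m - M := by linarith
  exact le_trans h2 (le_abs_self _)

end Prob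

end BPTS

open BPTS

/-- Proposition 3.4: in the directed half-plane lattice with i.i.d. non-atomic
nonnegative edge weights of mean `1`, there is a constant `κ > 0` such that for
any choice of vertices `(kₙ, n)` on level `n`, writing `Wₙ = d̂_ω((kₙ,n), ∂Ĥ)`,
we have `P[Wₙ < (1-κ) n] → 1` as `n → ∞`. -/
theorem boundary_passage_time_sublinear
    {Ω : Type*} [MeasureSpace Ω] [IsProbabilityMeasure (ℙ : Measure Ω)]
    (μ : Measure ℝ) [IsProbabilityMeasure μ]
    (hatom : ∀ a : ℝ, μ {a} = 0)
    (hsupp : μ (Set.Iio 0) = 0)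
    (hmean : ∫ t, t ∂μ = 1)
    (W : DirHPEdge → Ω → ℝ) (hmeas : ∀ e, Measurable (W e))
    (hindep : iIndepFun W ℙ)
    (hdist : ∀ e, Measure.map (W e) ℙ = μ) :
    ∃ κ : ℝ, 0 < κ ∧ ∀ kn : ℕ → ℤ, (∀ n : ℕ, Even (kn n + (n : ℤ))) →
      Tendsto
        (fun n : ℕ => ℙ {ω | bdryTime (fun e => W e ω) (kn n) n < (1 - κ) * n})
        atTop (nhds 1) := by
  classical
  set M : ℝ := ∫ ω, Z W (0:ℤ) 0 ω ∂ℙ with hMdef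
  have hMlt : M < 2 := integral_Z_lt_two hmeas hindep hdist hatom hsupp hmean
  have hM0 : 0 ≤ M := by
    rw [hMdef]
    refine integral_nonneg_of_ae ?_
    filter_upwards [ae_nonneg_W hmeas hdist hsupp (eR0 0 0), ae_nonneg_W hmeas hdist hsupp (eR1 0 0),
      ae_nonneg_W hmeas hdist hsupp (eL0 0 0), ae_nonneg_W hmeas hdist hsupp (eL1 0 0)]
      with ω h1 h2 h3 h4
    simp only [Pi.zero_apply] at h1 h2 h3 h4 ⊢
    have hz : Z W (0:ℤ) 0 ω = min (W (eR0 0 0) ω + W (eR1 0 0) ω)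
        (W (eL0 0 0) ω + W (eL1 0 0) ω) := rfl
    rw [hz]
    exact le_min (by linarith) (by linarith)
  set g : ℝ := 2 - M with hgdef
  have hg0 : 0 < g := by rw [hgdef]; linarith
  have hg2 : g ≤ 2 := by rw [hgdef]; linarith
  have hMg : M = 2 - g := by rw [hgdef]; ring
  refine ⟨g/8, by positivity, fun kn _ => ?_⟩
  set b : ℕ → ℤ := fun n => if Even n then kn n else kn n + 1 with hbdef
  set N : Set Ω := {ω | ∀ e, 0 ≤ W e ω} with hNdef
  set A : ℕ → Set Ω := fun n =>
    {ω | ∑ i ∈ Finset.range (n/2), Z W (b n) i ω < (M + g/2) * ((n/2 : ℕ) : ℝ)} with hAdef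
  set C : ℕ → Set Ω := fun n => {ω | W (eL0 (b n) (n/2)) ω < g/8 * n} with hCdef
  have hW0 : ∀ e, ℙ {ω | W e ω < 0} = 0 := by
    intro e
    have h := ae_nonneg_W hmeas hdist hsupp e
    rw [Filter.EventuallyLE, ae_iff] at h
    rw [← h]
    congr 1
    ext ω
    simp [not_le]
  have hNc : ℙ Nᶜ = 0 := by
    refine measure_mono_null ?_ (measure_iUnion_null (fun e : DirHPEdge => hW0 e))
    intro ω hω
    simp only [hNdef, Set.mem_compl_iff, Set.mem_setOf_eq, not_forall] at hω
    obtain ⟨e, he⟩ := hω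
    exact Set.mem_iUnion.mpr ⟨e, by simp only [Set.mem_setOf_eq]; linarith [not_le.mp he]⟩
  have hAc : ∀ n : ℕ, ℙ (A n)ᶜ
      = ℙ {ω | (M + g/2) * ((n/2 : ℕ) : ℝ) ≤ ∑ i ∈ Finset.range (n/2), Z W (0:ℤ) i ω} := by
    intro n
    have hident := identDistrib_sum_Z hmeas hindep hdist (b n) (n/2)
    have h1 : (A n)ᶜ = (fun ω => ∑ i ∈ Finset.range (n/2), Z W (b n) i ω) ⁻¹'
        (Set.Ici ((M + g/2) * ((n/2 : ℕ) : ℝ))) := by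
      ext ω
      simp [hAdef, not_lt]
    have h2 : {ω | (M + g/2) * ((n/2 : ℕ) : ℝ) ≤ ∑ i ∈ Finset.range (n/2), Z W (0:ℤ) i ω}
        = (fun ω => ∑ i ∈ Finset.range (n/2), Z W (0:ℤ) i ω) ⁻¹'
          (Set.Ici ((M + g/2) * ((n/2 : ℕ) : ℝ))) := rfl
    rw [h1, h2, hident.measure_mem_eq measurableSet_Ici]
  have haseq : Tendsto (fun m : ℕ =>
      ℙ {ω | (M + g/2) * (m : ℝ) ≤ ∑ i ∈ Finset.range m, Z W (0:ℤ) i ω}) atTop (nhds 0) :=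
    tendsto_prob_sum_ge hmeas hindep hdist hsupp hmean (by rw [← hMdef]; linarith)
  have hdiv : Tendsto (fun n : ℕ => n / 2) atTop atTop :=
    tendsto_atTop_atTop.mpr fun N => ⟨2*N, fun n hn => by omega⟩
  have hAten : Tendsto (fun n : ℕ => ℙ (A n)ᶜ) atTop (nhds 0) := by
    have hcomp : (fun n : ℕ => ℙ (A n)ᶜ) = (fun m : ℕ =>
        ℙ {ω | (M + g/2) * (m : ℝ) ≤ ∑ i ∈ Finset.range m, Z W (0:ℤ) i ω})
          ∘ (fun n : ℕ => n / 2) := funext fun n => hAc n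
    rw [hcomp]
    exact haseq.comp hdiv
  have hCc : ∀ n : ℕ, ℙ (C n)ᶜ = μ (Set.Ici (g/8 * n)) := by
    intro n
    have h1 : (C n)ᶜ = W (eL0 (b n) (n/2)) ⁻¹' (Set.Ici (g/8*n)) := by
      ext ω
      simp [hCdef, not_lt]
    rw [h1, ← Measure.map_apply (hmeas _) measurableSet_Ici, hdist]
  have hCten : Tendsto (fun n : ℕ => ℙ (C n)ᶜ) atTop (nhds 0) := by
    have hmono : Antitone (fun n : ℕ => Set.Ici (g/8 * (n:ℝ))) := fun i j hij =>
      Set.Ici_subset_Ici.mpr (by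
        have : (i:ℝ) ≤ j := by exact_mod_cast hij
        nlinarith)
    have hint := tendsto_measure_iInter_atTop (μ := μ)
      (fun n : ℕ => measurableSet_Ici.nullMeasurableSet) hmono ⟨0, measure_ne_top μ _⟩
    have hempty : ⋂ n : ℕ, Set.Ici (g/8 * (n:ℝ)) = ∅ := by
      ext x
      simp only [Set.mem_iInter, Set.mem_Ici, Set.mem_empty_iff_false, iff_false, not_forall,
        not_le]
      obtain ⟨n, hn⟩ := exists_nat_gt (x / (g/8))
      refine ⟨n, ?_⟩
      rw [div_lt_iff₀ (by positivity)] at hn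
      linarith
    rw [hempty] at hint
    simp only [measure_empty] at hint
    have hcomp : (fun n : ℕ => ℙ (C n)ᶜ) = fun n : ℕ => μ (Set.Ici (g/8 * (n:ℝ))) :=
      funext fun n => hCc n
    rw [hcomp]
    exact hint
  set G : ℕ → Set Ω := fun n => N ∩ (A n ∩ C n) with hGdef
  have hGc : ∀ n, ℙ (G n)ᶜ ≤ ℙ (A n)ᶜ + ℙ (C n)ᶜ := by
    intro n
    have hGcc : (G n)ᶜ = Nᶜ ∪ ((A n)ᶜ ∪ (C n)ᶜ) := by
      rw [hGdef]
      simp [Set.compl_inter]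
    rw [hGcc]
    calc ℙ (Nᶜ ∪ ((A n)ᶜ ∪ (C n)ᶜ)) ≤ ℙ Nᶜ + ℙ ((A n)ᶜ ∪ (C n)ᶜ) := measure_union_le _ _
      _ ≤ ℙ Nᶜ + (ℙ (A n)ᶜ + ℙ (C n)ᶜ) := by gcongr; exact measure_union_le _ _
      _ = ℙ (A n)ᶜ + ℙ (C n)ᶜ := by rw [hNc, zero_add]
  have hGcten : Tendsto (fun n => ℙ (G n)ᶜ) atTop (nhds 0) := by
    refine tendsto_of_tendsto_of_tendsto_of_le_of_le' tendsto_const_nhds ?_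
      (Eventually.of_forall fun n => zero_le) (Eventually.of_forall hGc)
    have h := hAten.add hCten
    simpa using h
  have hGten : Tendsto (fun n => ℙ (G n)) atTop (nhds 1) := by
    have hlow : ∀ n, 1 - ℙ (G n)ᶜ ≤ ℙ (G n) := by
      intro n
      rw [tsub_le_iff_right]
      calc (1:ℝ≥0∞) = ℙ (Set.univ) := measure_univ.symm
        _ = ℙ (G n ∪ (G n)ᶜ) := by rw [Set.union_compl_self]
        _ ≤ _ := measure_union_le _ _
    have h1 : Tendsto (fun n => (1:ℝ≥0∞) - ℙ (G n)ᶜ) atTop (nhds (1 - 0)) :=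
      ENNReal.Tendsto.sub tendsto_const_nhds hGcten (Or.inl ENNReal.one_ne_top)
    simp only [tsub_zero] at h1
    exact tendsto_of_tendsto_of_tendsto_of_le_of_le h1 tendsto_const_nhds hlow
      (fun n => prob_le_one)
  have hsub : ∀ n : ℕ, 1 ≤ n →
      G n ⊆ {ω | bdryTime (fun e => W e ω) (kn n) n < (1 - g/8) * n} := by
    intro n hn ω hω
    obtain ⟨hωN, hωA, hωC⟩ := hω
    have hV : ∀ e, 0 ≤ W e ω := hωN
    have hbb := bdryTime_le (fun e => W e ω) hV (kn n) n
    have hbn : (if Even n then kn n else kn n + 1) = b n := by rw [hbdef]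
    rw [hbn] at hbb
    simp only [hAdef, hCdef, Set.mem_setOf_eq] at hωA hωC
    simp only [Set.mem_setOf_eq]
    have hZeq : (∑ i ∈ Finset.range (n/2), blockMin (fun e => W e ω) (b n) i)
        = ∑ i ∈ Finset.range (n/2), Z W (b n) i ω := rfl
    rw [hZeq] at hbb
    have h2m : (2 * ((n/2 : ℕ) : ℝ)) ≤ (n : ℝ) := by
      have : 2 * (n/2) ≤ n := by omega
      exact_mod_cast this
    have hn1 : (1:ℝ) ≤ (n:ℝ) := by exact_mod_cast hn
    have hextra : (if Even n then 0 else W (eL0 (b n) (n/2)) ω) < g/8 * n := by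
      split
      · nlinarith
      · exact hωC
    have hkey : (M + g/2) * ((n/2 : ℕ) : ℝ) + g/8 * n ≤ (1 - g/8) * n := by
      nlinarith [mul_nonneg (by linarith : (0:ℝ) ≤ 1 - g/4)
        (by linarith : (0:ℝ) ≤ (n:ℝ) - 2*((n/2 : ℕ) : ℝ))]
    calc bdryTime (fun e => W e ω) (kn n) n
        ≤ (∑ i ∈ Finset.range (n/2), Z W (b n) i ω)
          + (if Even n then 0 else W (eL0 (b n) (n/2)) ω) := hbb
      _ < (M + g/2) * ((n/2 : ℕ) : ℝ) + g/8 * n := add_lt_add hωA hextra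
      _ ≤ (1 - g/8) * n := hkey
  refine tendsto_of_tendsto_of_tendsto_of_le_of_le' hGten tendsto_const_nhds ?_
    (Eventually.of_forall fun n => prob_le_one)
  filter_upwards [eventually_ge_atTop 1] with n hn
  exact measure_mono (hsub n hn)
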